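/- Every real 3×3 special orthogonal matrix R (i.e. RᵀR = I and det R = 1) can be written as R = R_z(γ₁) · R_x(γ₂) · R_z(γ₃) for some real numbers γ₁, γ₂, γ₃ (Euler decomposition with z–x–z axes). -/

import Mathlib

open Real

noncomputable def Rz (φ : ℝ) : Matrix (Fin 3) (Fin 3) ℝ :=
  !![Real.cos φ, -Real.sin φ, 0;
     Real.sin φ, Real.cos φ, 0;
     0, 0, 1]

noncomputable def Rx (θ : ℝ) : Matrix (Fin 3) (Fin 3) ℝ :=
  !![1, 0, 0;
     0, Real.cos θ, -Real.sin θ;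
     0, Real.sin θ, Real.cos θ]

lemma exists_cos_sin (x y : ℝ) (hxy : x ^ 2 + y ^ 2 = 1) :
    ∃ θ : ℝ, Real.cos θ = x ∧ Real.sin θ = y := by
  have hx1 : -1 ≤ x := by nlinarith [sq_nonneg y]
  have hx2 : x ≤ 1 := by nlinarith [sq_nonneg y]
  have hs : Real.sin (Real.arccos x) = Real.sqrt (1 - x ^ 2) := Real.sin_arccos x
  have hsq : Real.sqrt (1 - x ^ 2) = |y| := by
    rw [show (1 : ℝ) - x ^ 2 = y ^ 2 by linarith, Real.sqrt_sq_eq_abs]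
  rcases le_or_gt 0 y with hy | hy
  · exact ⟨Real.arccos x, Real.cos_arccos hx1 hx2, by rw [hs, hsq, abs_of_nonneg hy]⟩
  · refine ⟨-Real.arccos x, ?_, ?_⟩
    · rw [Real.cos_neg]; exact Real.cos_arccos hx1 hx2
    · rw [Real.sin_neg, hs, hsq, abs_of_neg hy, neg_neg]

lemma transpose_fin_three' (a b c d e f g h i : ℝ) :
    (!![a, b, c; d, e, f; g, h, i]).transpose = !![a, d, g; b, e, h; c, f, i] := by
  ext x y; fin_cases x <;> fin_cases y <;> rfl

set_option maxHeartbeats 1000000 in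
theorem euler_zxz (R : Matrix (Fin 3) (Fin 3) ℝ)
    (horth : R.transpose * R = 1) (hdet : R.det = 1) :
    ∃ γ₁ γ₂ γ₃ : ℝ, R = Rz γ₁ * Rx γ₂ * Rz γ₃ := by
  have hR : R = !![R 0 0, R 0 1, R 0 2; R 1 0, R 1 1, R 1 2; R 2 0, R 2 1, R 2 2] := by
    ext x y; fin_cases x <;> fin_cases y <;> rfl
  set a := R 0 0; set b := R 0 1; set c := R 0 2
  set d := R 1 0; set e := R 1 1; set f := R 1 2
  set g := R 2 0; set h := R 2 1; set i := R 2 2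
  have horth' : R * R.transpose = 1 := mul_eq_one_comm.mp horth
  have hadj : R.transpose = R.adjugate := by
    calc R.transpose = R.transpose * (R * R.adjugate) := by
          rw [Matrix.mul_adjugate, hdet, one_smul, mul_one]
      _ = (R.transpose * R) * R.adjugate := by rw [mul_assoc]
      _ = R.adjugate := by rw [horth, one_mul]
  rw [hR, transpose_fin_three', Matrix.mul_fin_three, Matrix.one_fin_three] at horth horth'
  rw [hR, transpose_fin_three', Matrix.adjugate_fin_three_of] at hadj
  have O := Matrix.ext_iff.mpr horth
  have O' := Matrix.ext_iff.mpr horth'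
  have A := Matrix.ext_iff.mpr hadj
  have hcol2 : c * c + f * f + i * i = 1 := by simpa using O 2 2
  have hrow0 : a * a + b * b + c * c = 1 := by simpa using O' 0 0
  have hrow2 : g * g + h * h + i * i = 1 := by simpa using O' 2 2
  have h_a : a = e * i - f * h := by simpa using A 0 0
  have h_d : d = -(b * i) + c * h := by simpa using A 0 1
  have h_b : b = -(d * i) + f * g := by simpa using A 1 0
  have h_e : e = a * i - c * g := by simpa using A 1 1
  clear horth horth' hadj O O' A hdet
  rcases eq_or_lt_of_le (show i ^ 2 ≤ 1 by nlinarith [sq_nonneg c, sq_nonneg f]) with hi | hi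
  · -- degenerate case: i^2 = 1
    have hc0 : c = 0 := by nlinarith [sq_nonneg c, sq_nonneg f]
    have hf0 : f = 0 := by nlinarith [sq_nonneg c, sq_nonneg f]
    have hg0 : g = 0 := by nlinarith [sq_nonneg g, sq_nonneg h]
    have hh0 : h = 0 := by nlinarith [sq_nonneg g, sq_nonneg h]
    have hab : a ^ 2 + b ^ 2 = 1 := by nlinarith
    have hii : (i - 1) * (i + 1) = 0 := by nlinarith
    rcases mul_eq_zero.mp hii with hi1 | hi1
    · -- i = 1
      have hi1 : i = 1 := by linarith
      obtain ⟨γ₁, hc1, hs1⟩ := exists_cos_sin a (-b) (by nlinarith)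
      refine ⟨γ₁, 0, 0, ?_⟩
      rw [hR]; simp only [Rz, Rx, Real.cos_zero, Real.sin_zero,
        Matrix.mul_fin_three, hc1, hs1]
      have hd : d = -b := by rw [h_d, hc0, hi1]; ring
      have he : e = a := by rw [h_e, hc0, hi1]; ring
      ext x y
      fin_cases x <;> fin_cases y <;>
        simp [hc0, hf0, hg0, hh0, hi1, hd, he]
    · -- i = -1
      have hi1 : i = -1 := by linarith
      obtain ⟨γ₁, hc1, hs1⟩ := exists_cos_sin a b (by nlinarith)
      refine ⟨γ₁, Real.pi, 0, ?_⟩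
      rw [hR]; simp only [Rz, Rx, Real.cos_zero, Real.sin_zero, Real.cos_pi, Real.sin_pi,
        Matrix.mul_fin_three, hc1, hs1]
      have hd : d = b := by rw [h_d, hc0, hi1]; ring
      have he : e = -a := by rw [h_e, hc0, hi1]; ring
      ext x y
      fin_cases x <;> fin_cases y <;>
        simp [hc0, hf0, hg0, hh0, hi1, hd, he]
  · -- generic case: i^2 < 1
    set s := Real.sqrt (1 - i ^ 2) with hs_def
    have hs2 : s ^ 2 = 1 - i ^ 2 := Real.sq_sqrt (by nlinarith)
    have hspos : 0 < s := Real.sqrt_pos.mpr (by nlinarith)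
    have hsne : s ≠ 0 := ne_of_gt hspos
    obtain ⟨γ₂, hc2, hsin2⟩ := exists_cos_sin i s (by nlinarith)
    obtain ⟨γ₁, hc1, hs1⟩ := exists_cos_sin (-f / s) (c / s) (by
      field_simp
      linear_combination hcol2 - hs2)
    obtain ⟨γ₃, hc3, hs3⟩ := exists_cos_sin (h / s) (g / s) (by
      field_simp
      linear_combination hrow2 - hs2)
    refine ⟨γ₁, γ₂, γ₃, ?_⟩
    rw [hR]; simp only [Rz, Rx, Matrix.mul_fin_three, hc1, hs1, hc2, hsin2, hc3, hs3]
    ext x y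
    fin_cases x <;> fin_cases y <;> simp
    · field_simp
      linear_combination a * hs2 + h_a + i * h_e
    · field_simp
      linear_combination b * hs2 + h_b - i * h_d
    · field_simp
    · field_simp
      linear_combination d * hs2 + h_d - i * h_b
    · field_simp
      linear_combination e * hs2 + h_e + i * h_a
    · field_simp
    · field_simp
    · field_simp
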